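/- For d ≥ 0, a quantifier-free Boolean formula φ over the disjoint variable blocks x₁,…,x_{2d+1}, and the associated canonical mechanism M(φ, x₁,…,x_{2d+1}): if the closed formula ∀x₁ ∃x₂ ∀x₃ … ∀x_{2d+1} φ is true, then for every action profile s of the mechanism, either the deontic constraint γ holds at s, or there exist a positive d' ≤ d and an agent i ≤ 2d+1 who is d'-order responsible under s. -/

import Mathlib

/-- A sequential decision-making mechanism has `n` agents acting in order; agent `i`
controls an action block of type `A i` (the Boolean valuations of its variable block),
and the deontic constraint is a predicate `γ` on action profiles.
`Resp γ d i s` says that agent `i` is `d`-order responsible under profile `s`: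
`R^d_i = Gap_{d-1} ∧ ∃v_i ∀v_{i+1} … ∀v_n ¬Gap_{d-1}`,
where `Gap_{d-1} = ¬γ ∧ ⋀_{j≤n} ⋀_{1≤e<d} ¬R^e_j`. -/
def Resp {n : ℕ} {A : Fin n → Type} (γ : (∀ i, A i) → Prop) :
    (d : ℕ) → Fin n → (∀ i, A i) → Prop
  | 0, _, _ => False
  | d+1, i, s =>
    (¬ γ s ∧ ∀ e ≤ d, ∀ j, ¬ Resp γ e j s) ∧
    ∃ t : ∀ i', A i', (∀ j, j < i → t j = s j) ∧
      ∀ u : ∀ i', A i', (∀ j, j ≤ i → u j = t j) →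
        ¬ (¬ γ u ∧ ∀ e ≤ d, ∀ j, ¬ Resp γ e j u)
termination_by d => d
decreasing_by all_goals omega

/-- A mechanism is `d`-gap-free if for every profile violating the deontic constraint
there are `d' ≤ d` and an agent who is `d'`-order responsible. -/
def GapFree {n : ℕ} {A : Fin n → Type} (γ : (∀ i, A i) → Prop) (d : ℕ) : Prop :=
  ∀ s, ¬ γ s → ∃ d' ≤ d, ∃ i, Resp γ d' i s

/-- `AltTrue n A γ k s` : alternating quantification over the remaining blocks
`k, k+1, …, n-1` (a `∀` over block `k` when `k` is even in 0-based counting,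
i.e. blocks 1,3,5,… in 1-based counting, and `∃` when `k` is odd), of the
statement that `γ` holds at the resulting profile.  Reading `∀` as Devil's
moves and `∃` as Moralist's moves, `AltTrue n A γ k s` says that the game node
reached after the first `k` moves recorded in `s` is winning for Moralist. -/
def AltTrue (n : ℕ) (A : Fin n → Type) (γ : (∀ i, A i) → Prop) :
    (k : ℕ) → (∀ i, A i) → Prop :=
  fun k s =>
    if h : k < n then
      if k % 2 = 0 then
        ∀ a : A ⟨k, h⟩, AltTrue n A γ (k+1) (Function.update s ⟨k, h⟩ a)
      else
        ∃ a : A ⟨k, h⟩, AltTrue n A γ (k+1) (Function.update s ⟨k, h⟩ a)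
    else γ s
termination_by k => n - k
decreasing_by all_goals omega

/-- Action block of agent `i` in the canonical mechanism `M(φ, x₁,…,x_{2d+1})`:
the original block `X i`, extended by one fresh Boolean variable `q` exactly when
`i` is even in 1-based counting (odd in 0-based counting); for the other agents the
extension is the empty block `Fin 0 → Bool`. -/
def CanA {d : ℕ} (X : Fin (2*d+1) → Type) (i : Fin (2*d+1)) : Type :=
  X i × (Fin ((i : ℕ) % 2) → Bool)

/-- Deontic constraint of the canonical mechanism: `γ = φ ∧ ⋀_{1≤i≤d} q_{2i}`. -/
def canGamma {d : ℕ} (X : Fin (2*d+1) → Type) (φ : (∀ i, X i) → Prop)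
    (s : ∀ i, CanA X i) : Prop :=
  φ (fun i => (s i).1) ∧ ∀ i, ∀ j, (s i).2 j = true

/-- `s` conforms to the Devil strategy `σ`: every odd-numbered (1-based; even
0-based) block of `s` is the one prescribed by `σ`. -/
def Conform {n : ℕ} {A : Fin n → Type}
    (σ : ∀ i : Fin n, (∀ j, A j) → A i) (s : ∀ i, A i) : Prop :=
  ∀ i : Fin n, (i : ℕ) % 2 = 0 → s i = σ i s

open Classical in
/-- The degree of immorality `‖s‖`: one sin for each fresh variable `q_{2i}`
that is false under `s`, plus one sin if `s` conforms to the Devil strategy `σ`. -/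
noncomputable def immorality {d : ℕ} {X : Fin (2*d+1) → Type}
    (σ : ∀ i : Fin (2*d+1), (∀ j, CanA X j) → CanA X i)
    (s : ∀ i, CanA X i) : ℕ :=
  (Finset.univ.filter (fun i : Fin (2*d+1) => ∃ j, (s i).2 j = false)).card
  + (if Conform σ s then 1 else 0)

/-- If the closed formula `∀x₁ ∃x₂ ∀x₃ … ∀x_{2d+1} φ` is true, then for every
action profile `s` of the canonical mechanism `M(φ, x₁,…,x_{2d+1})`, either the
deontic constraint holds at `s`, or some agent is `d'`-order responsible under
`s` for some positive `d' ≤ d`. -/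

theorem altTrue_congr {n : ℕ} {A : Fin n → Type} {γ : (∀ i, A i) → Prop}
    (k : ℕ) (s s' : ∀ i, A i)
    (h : ∀ j : Fin n, (j : ℕ) < k → s j = s' j) (H : AltTrue n A γ k s) :
    AltTrue n A γ k s' := by
  rw [AltTrue] at H ⊢
  by_cases hk : k < n
  · rw [dif_pos hk] at H ⊢
    have key : ∀ a : A ⟨k, hk⟩, ∀ j : Fin n, (j : ℕ) < k + 1 →
        Function.update s ⟨k, hk⟩ a j = Function.update s' ⟨k, hk⟩ a j := by
      intro a j hj
      by_cases hji : j = ⟨k, hk⟩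
      · subst hji; simp
      · rw [Function.update_of_ne hji, Function.update_of_ne hji]
        exact h j (by
          have : (j : ℕ) ≠ k := fun hc => hji (Fin.ext hc)
          omega)
    by_cases hp : k % 2 = 0
    · rw [if_pos hp] at H ⊢
      intro a
      exact altTrue_congr (k+1) _ _ (key a) (H a)
    · rw [if_neg hp] at H ⊢
      obtain ⟨a, Ha⟩ := H
      exact ⟨a, altTrue_congr (k+1) _ _ (key a) Ha⟩
  · rw [dif_neg hk] at H ⊢
    have : s = s' := funext fun j => h j (lt_of_lt_of_le j.isLt (le_of_not_gt hk))
    rwa [← this]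
termination_by n - k

/-- Clean prefix: all fresh bits before `k` are true and the position at `k` is
winning for Moralist. -/
def GoodPrefix {d : ℕ} (X : Fin (2*d+1) → Type) (φ : (∀ i, X i) → Prop)
    (s : ∀ i, CanA X i) (k : ℕ) : Prop :=
  (∀ j : Fin (2*d+1), (j : ℕ) < k → ∀ q, (s j).2 q = true) ∧
  AltTrue (2*d+1) X φ k (fun i => (s i).1)

theorem claim_aux {d : ℕ} (X : Fin (2*d+1) → Type) (φ : (∀ i, X i) → Prop) :
    ∀ c ≤ d, ∀ s : ∀ i, CanA X i, ¬ canGamma X φ s →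
      GoodPrefix X φ s (2*(d-c)+1) →
      ∃ e, 1 ≤ e ∧ e ≤ c ∧ ∃ j, Resp (canGamma X φ) e j s := by
  intro c
  induction c with
  | zero =>
    intro _ s hγ hgp
    exfalso
    apply hγ
    refine ⟨?_, ?_⟩
    · have h2 := hgp.2
      rw [AltTrue, dif_neg (by omega : ¬ (2*(d-0)+1 < 2*d+1))] at h2
      exact h2
    · intro i q
      exact hgp.1 i (by omega) q
  | succ c ih =>
    intro hc s hγ hgp
    by_cases hex : ∃ e, 1 ≤ e ∧ e ≤ c ∧ ∃ j, Resp (canGamma X φ) e j s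
    · obtain ⟨e, h1, h2, hj⟩ := hex
      exact ⟨e, h1, le_trans h2 (Nat.le_succ c), hj⟩
    · have hgap : ∀ e ≤ c, ∀ j, ¬ Resp (canGamma X φ) e j s := by
        intro e he j hr
        match e, hr with
        | 0, hr => rw [Resp] at hr; exact hr
        | e'+1, hr => exact hex ⟨e'+1, by omega, by omega, j, hr⟩
      have hi : 2*(d-(c+1))+1 < 2*d+1 := by omega
      set I : Fin (2*d+1) := ⟨2*(d-(c+1))+1, hi⟩ with hI
      have h2 := hgp.2
      rw [AltTrue, dif_pos hi, if_neg (by omega : ¬ (2*(d-(c+1))+1) % 2 = 0)] at h2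
      obtain ⟨a, ha⟩ := h2
      set t : ∀ i', CanA X i' :=
        Function.update s I (⟨a, fun _ => true⟩ : CanA X I) with ht
      refine ⟨c+1, by omega, le_refl _, I, ?_⟩
      rw [Resp]
      refine ⟨⟨hγ, hgap⟩, t, ?_, ?_⟩
      · intro j hj
        exact Function.update_of_ne (Fin.ne_of_lt hj) _ _
      · rintro u hu ⟨hγu, hgapu⟩
        have huI : u I = (⟨a, fun _ => true⟩ : CanA X I) := by
          rw [hu I (le_refl I), ht]; exact Function.update_self _ _ _
        have hult : ∀ j : Fin (2*d+1), (j : ℕ) < (I : ℕ) → u j = s j := by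
          intro j hj
          have hjle : j ≤ I := Fin.le_def.mpr (le_of_lt hj)
          rw [hu j hjle, ht]; exact Function.update_of_ne (Fin.ne_of_lt (Fin.lt_def.mpr hj)) _ _
        have hgpu : GoodPrefix X φ u (2*(d-c)+1) := by
          constructor
          · intro j hj q
            have hq := q.isLt
            have hjodd : (j : ℕ) % 2 = 1 := by omega
            have hjI : (j : ℕ) < (I : ℕ) ∨ (j : ℕ) = (I : ℕ) := by
              simp only [hI]
              omega
            rcases hjI with hlt | heq
            · rw [hult j hlt]
              exact hgp.1 j hlt q
            · have : j = I := Fin.ext heq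
              subst this
              rw [huI]
          · have hA1 : AltTrue (2*d+1) X φ ((2*(d-(c+1))+1)+1)
                (fun i => (u i).1) := by
              refine altTrue_congr _ _ _ ?_ ha
              intro j hj
              by_cases hji : j = I
              · subst hji
                rw [Function.update_self, huI]
              · have hjlt : (j : ℕ) < (I : ℕ) := by
                  have : (j : ℕ) ≠ (I : ℕ) := fun hc => hji (Fin.ext hc)
                  simp only [hI] at this ⊢
                  omega
                rw [Function.update_of_ne hji, hult j hjlt]
            have hk1 : (2*(d-(c+1))+1)+1 < 2*d+1 := by omega
            rw [AltTrue, dif_pos hk1,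
              if_pos (by omega : ((2*(d-(c+1))+1)+1) % 2 = 0)] at hA1
            have hA2 := hA1 ((fun i => (u i).1) ⟨(2*(d-(c+1))+1)+1, hk1⟩)
            rw [Function.update_eq_self] at hA2
            rw [show 2*(d-c)+1 = ((2*(d-(c+1))+1)+1)+1 from by omega]
            exact hA2
        obtain ⟨e, he1, he2, j, hr⟩ := ih (by omega) u hγu hgpu
        exact hgapu e he2 j hr

theorem qbf_true_imp_responsible {d : ℕ} (X : Fin (2*d+1) → Type)
    [∀ i, Nonempty (X i)] (φ : (∀ i, X i) → Prop)
    (hQ : ∀ s₀ : ∀ i, X i, AltTrue (2*d+1) X φ 0 s₀) :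
    ∀ s : ∀ i, CanA X i,
      canGamma X φ s ∨ ∃ d', 0 < d' ∧ d' ≤ d ∧ ∃ i, Resp (canGamma X φ) d' i s := by
  intro s
  by_cases hγ : canGamma X φ s
  · left; exact hγ
  · right
    have hgp : GoodPrefix X φ s (2*(d-d)+1) := by
      constructor
      · intro j hj q
        have := q.isLt
        omega
      · have h0 := hQ (fun i => (s i).1)
        rw [AltTrue, dif_pos (by omega : 0 < 2*d+1),
          if_pos (by norm_num : 0 % 2 = 0)] at h0
        have h1 := h0 ((fun i => (s i).1) ⟨0, by omega⟩)
        rw [Function.update_eq_self] at h1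
        rw [show 2*(d-d)+1 = 0+1 from by omega]
        exact h1
    obtain ⟨e, h1, h2, j, hr⟩ := claim_aux X φ d (le_refl d) s hγ hgp
    exact ⟨e, h1, h2, j, hr⟩
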